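/- Let c, a, λ ∈ ℂ with c ≠ 0, a² = −6c², and λ² = 2a/c. Let A_{N7}(c) be the 4×4 matrix with rows (0, −3c, 0, −1), (−1, 0, −2c, 0), (0, −2, 0, c), (0, 0, 3, 0), and let A_{D6}(a) be the 4×4 matrix with rows (0, −3a, 0, −12), (−2, 0, 4a, 0), (0, 2, 0, 2a), (0, 0, 3, 0). Then the characteristic polynomial of λ·A_{N7}(c) equals the characteristic polynomial of A_{D6}(a), namely X⁴ − 20a·X² + 36a² − 144. (This is the matrix-level form of the unexpected relation: when a² = −6c², the homogeneous Legendrian curves in ℙ³ associated to the multiply-transitive (2,3,5)-distributions N7_c and D6_a are projectively equivalent.) -/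

import Mathlib

open Matrix Polynomial

lemma charpoly_fin4 (m00 m01 m02 m03 m10 m11 m12 m13 m20 m21 m22 m23 m30 m31 m32 m33 : ℂ) :
    (!![m00,m01,m02,m03; m10,m11,m12,m13; m20,m21,m22,m23; m30,m31,m32,m33] : Matrix (Fin 4) (Fin 4) ℂ).charpoly
    = (!![X - C m00, -C m01, -C m02, -C m03;
          -C m10, X - C m11, -C m12, -C m13;
          -C m20, -C m21, X - C m22, -C m23;
          -C m30, -C m31, -C m32, X - C m33] : Matrix (Fin 4) (Fin 4) ℂ[X]).det := by
  rw [Matrix.charpoly]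
  congr 1
  ext i j
  fin_cases i <;> fin_cases j <;>
    simp [charmatrix_apply, Matrix.one_apply]


/-- When `a² = −6c²` (and `λ² = 2a/c`), the rescaled symmetry generator `λ·A_{N7}(c)` has
the same characteristic polynomial as `A_{D6}(a)`, namely `X⁴ − 20a·X² + 36a² − 144`.
This is the matrix-level form of the unexpected relation: the homogeneous Legendrian
curves in `ℙ³` associated to `N7_c` and `D6_a` are projectively equivalent. -/
theorem N7_D6_charpoly_relation
    (c a l : ℂ) (hc : c ≠ 0) (ha : a ^ 2 = -6 * c ^ 2) (hl : l ^ 2 = 2 * a / c)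
    (AN7 AD6 : Matrix (Fin 4) (Fin 4) ℂ)
    (hAN7 : AN7 = !![0, -3 * c, 0, -1; -1, 0, -2 * c, 0; 0, -2, 0, c; 0, 0, 3, 0])
    (hAD6 : AD6 = !![0, -3 * a, 0, -12; -2, 0, 4 * a, 0; 0, 2, 0, 2 * a; 0, 0, 3, 0]) :
    (l • AN7).charpoly = AD6.charpoly ∧
      AD6.charpoly = X ^ 4 - C (20 * a) * X ^ 2 + C (36 * a ^ 2 - 144) := by
  have hc2 : l ^ 2 * c = 2 * a := by field_simp at hl; linear_combination hl
  have hl4 : l ^ 4 = -24 := by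
    have h3 : (l ^ 4 + 24) * c ^ 2 = 0 := by
      have h2 : (l ^ 2 * c) ^ 2 = (2 * a) ^ 2 := by rw [hc2]
      linear_combination h2 + 4 * ha
    rcases mul_eq_zero.mp h3 with h | h
    · linear_combination h
    · exact absurd (pow_eq_zero_iff (by norm_num) |>.mp h) hc
  have hD6 : AD6.charpoly = X ^ 4 - C (20 * a) * X ^ 2 + C (36 * a ^ 2 - 144) := by
    subst hAD6
    rw [charpoly_fin4]
    simp [Matrix.det_succ_row_zero, Fin.sum_univ_succ,
      show ((1 : Fin 4).succAbove 2) = 3 from rfl,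
      show (Fin.castSucc 2 : Fin 4) = 2 from rfl, map_ofNat,
    show ((3 : Fin 4).succAbove (2 : Fin 3)) = 2 from rfl]
    ring
  refine ⟨?_, hD6⟩
  have hsmul : l • AN7 = !![0, l * (-3 * c), 0, l * (-1);
      l * (-1), 0, l * (-2 * c), 0; 0, l * (-2), 0, l * c; 0, 0, l * 3, 0] := by
    subst hAN7
    ext i j
    fin_cases i <;> fin_cases j <;> simp [Matrix.smul_apply, Matrix.vecHead, Matrix.vecTail]
  rw [hD6, hsmul, charpoly_fin4]
  have hc2C : (C l : ℂ[X]) ^ 2 * C c = 2 * C a := by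
    have := congrArg C hc2
    simpa only [C_mul, C_pow, map_ofNat] using this
  have hl4C : (C l : ℂ[X]) ^ 4 = -24 := by
    simpa only [map_pow, map_neg, map_ofNat] using congrArg C hl4
  have haC : (C a : ℂ[X]) ^ 2 = -6 * C c ^ 2 := by
    have := congrArg C ha
    simp only [C_mul, C_pow, map_neg, map_ofNat] at this
    simpa using this
  simp [Matrix.det_succ_row_zero, Fin.sum_univ_succ,
    show ((1 : Fin 4).succAbove 2) = 3 from rfl,
    show (Fin.castSucc 2 : Fin 4) = 2 from rfl, map_ofNat,
    show ((3 : Fin 4).succAbove (2 : Fin 3)) = 2 from rfl]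
  ring_nf
  linear_combination (-(10:ℂ[X]) * X ^ 2) * hc2C - 72 * haC + ((6 : ℂ[X]) + 9 * C c ^ 2) * hl4C + 36 * haC
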